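/- Let f be absolutely continuous on every interval [ε,M] with 0<ε<M, and let a < 1/2. If ∫₀^∞ |f'(r)|² r^{2a} dr < ∞, then f extends continuously to [0,1] (i.e. f(0) exists) and lim_{t→0} |f(t) - f(0)| · t^{-(1/2 - a)} = 0. -/

import Mathlib

open MeasureTheory Set Filter Topology
open scoped ENNReal NNReal

/-- Trace lemma at the origin, case `a < 1/2`: if `f` is locally absolutely continuous on
`(0,∞)` with derivative `f'` and `∫₀^∞ |f'(r)|² r^(2a) dr < ∞`, then `f` has a boundary
value `L = f(0)` at the origin and `|f(t) - L| t^(-(1/2 - a)) → 0` as `t → 0⁺`. -/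
theorem stmt_0 (f f' : ℝ → ℂ) (a : ℝ) (ha : a < 1/2)
    (hloc : ∀ s ∈ Ioi (0:ℝ), ∀ t ∈ Ioi (0:ℝ), IntervalIntegrable f' volume s t)
    (hFTC : ∀ s ∈ Ioi (0:ℝ), ∀ t ∈ Ioi (0:ℝ), f t - f s = ∫ r in s..t, f' r)
    (hint : ∫⁻ r in Ioi (0:ℝ), ENNReal.ofReal (‖f' r‖^2 * r ^ (2*a)) < ⊤) :
    ∃ L : ℂ, Tendsto f (𝓝[>] (0:ℝ)) (𝓝 L) ∧
      Tendsto (fun t : ℝ => ‖f t - L‖ * t ^ (-(1/2 - a))) (𝓝[>] (0:ℝ)) (𝓝 0) := by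
  have ha' : (0:ℝ) < 1 - 2*a := by linarith
  set g : ℝ → ℝ≥0∞ := fun r => ENNReal.ofReal (‖f' r‖^2 * r ^ (2*a)) with hg
  set G : ℝ → ℝ≥0∞ := fun t => ∫⁻ r in Ioc (0:ℝ) t, g r with hGdef
  -- a.e. strong measurability of f' on Ioc 0 1
  have hUnion : Ioc (0:ℝ) 1 = ⋃ n : ℕ, Ioc (1/(n+1) : ℝ) 1 := by
    ext x
    simp only [mem_Ioc, mem_iUnion]
    constructor
    · rintro ⟨hx0, hx1⟩
      obtain ⟨n, hn⟩ := exists_nat_one_div_lt hx0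
      exact ⟨n, hn, hx1⟩
    · rintro ⟨n, hn, hx1⟩
      refine ⟨lt_trans (by positivity) hn, hx1⟩
  have hmeasC : AEStronglyMeasurable f' (volume.restrict (Ioc (0:ℝ) 1)) := by
    rw [hUnion, aestronglyMeasurable_iUnion_iff]
    intro n
    exact ((hloc _ (by simp; positivity) 1 (by simp)).1).aestronglyMeasurable
  -- Hoelder estimate
  have hmeasN : AEMeasurable (fun r : ℝ => ‖f' r‖) (volume.restrict (Ioc (0:ℝ) 1)) :=
    hmeasC.norm.aemeasurable
  have hGfin : ∀ t : ℝ, G t ≤ ∫⁻ r in Ioi (0:ℝ), g r := by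
    intro t
    exact lintegral_mono_set Ioc_subset_Ioi_self
  have key : ∀ t ∈ Ioc (0:ℝ) 1,
      ∫⁻ r in Ioc (0:ℝ) t, ENNReal.ofReal ‖f' r‖ ≤
        (G t) ^ (1/2:ℝ) * (ENNReal.ofReal (t ^ (1-2*a) / (1-2*a))) ^ (1/2:ℝ) := by
    intro t ht
    set μt := volume.restrict (Ioc (0:ℝ) t) with hμt
    have hsub : μt ≤ volume.restrict (Ioc (0:ℝ) 1) :=
      Measure.restrict_mono (Ioc_subset_Ioc le_rfl ht.2) le_rfl
    set F1 : ℝ → ℝ≥0∞ := fun r => ENNReal.ofReal (‖f' r‖ * r ^ a) with hF1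
    set F2 : ℝ → ℝ≥0∞ := fun r => ENNReal.ofReal (r ^ (-a)) with hF2
    have hm1 : AEMeasurable F1 μt := by
      refine ENNReal.measurable_ofReal.comp_aemeasurable ?_
      exact ((hmeasN.mono_measure hsub).mul
        ((measurable_id.pow_const a).aemeasurable))
    have hm2 : AEMeasurable F2 μt :=
      ENNReal.measurable_ofReal.comp_aemeasurable
        ((measurable_id.pow_const (-a)).aemeasurable)
    have hprod : ∫⁻ r in Ioc (0:ℝ) t, ENNReal.ofReal ‖f' r‖ = ∫⁻ r, (F1 * F2) r ∂μt := by
      refine setLIntegral_congr_fun measurableSet_Ioc (fun r hr => ?_)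
      have hr0 : (0:ℝ) < r := hr.1
      simp only [Pi.mul_apply, hF1, hF2]
      rw [← ENNReal.ofReal_mul (by positivity), mul_assoc, ← Real.rpow_add hr0]
      simp
    have h1 : ∫⁻ r, F1 r ^ (2:ℝ) ∂μt = G t := by
      refine setLIntegral_congr_fun measurableSet_Ioc (fun r hr => ?_)
      have hr0 : (0:ℝ) < r := hr.1
      show ENNReal.ofReal (‖f' r‖ * r ^ a) ^ (2:ℝ) = ENNReal.ofReal (‖f' r‖^2 * r ^ (2*a))
      rw [ENNReal.ofReal_rpow_of_nonneg (by positivity) (by norm_num)]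
      congr 1
      rw [Real.mul_rpow (norm_nonneg _) (by positivity), ← Real.rpow_mul hr0.le]
      have e1 : ‖f' r‖ ^ (2:ℝ) = ‖f' r‖ ^ (2:ℕ) := by
        rw [← Real.rpow_natCast ‖f' r‖ 2]; norm_num
      rw [e1, mul_comm a 2]
    have h2 : ∫⁻ r, F2 r ^ (2:ℝ) ∂μt = ENNReal.ofReal (t ^ (1-2*a) / (1-2*a)) := by
      have hpt : ∀ r ∈ Ioc (0:ℝ) t, F2 r ^ (2:ℝ) = ENNReal.ofReal (r ^ (-(2*a))) := by
        intro r hr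
        show ENNReal.ofReal (r ^ (-a)) ^ (2:ℝ) = ENNReal.ofReal (r ^ (-(2*a)))
        rw [ENNReal.ofReal_rpow_of_nonneg (Real.rpow_nonneg hr.1.le _) (by norm_num),
          ← Real.rpow_mul hr.1.le]
        congr 1
        ring
      rw [setLIntegral_congr_fun measurableSet_Ioc hpt]
      have hInt : IntegrableOn (fun r : ℝ => r ^ (-(2*a))) (Ioc (0:ℝ) t) :=
        (intervalIntegral.intervalIntegrable_rpow' (by linarith)).1
      have hnn : 0 ≤ᵐ[μt] fun r : ℝ => r ^ (-(2*a)) :=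
        (ae_restrict_iff' measurableSet_Ioc).2
          (ae_of_all _ fun r hr => (Real.rpow_pos_of_pos hr.1 _).le)
      rw [← ofReal_integral_eq_lintegral_ofReal hInt hnn]
      congr 1
      rw [← intervalIntegral.integral_of_le ht.1.le,
        integral_rpow (Or.inl (by linarith)),
        Real.zero_rpow (by linarith)]
      norm_num
      ring_nf
    calc ∫⁻ r in Ioc (0:ℝ) t, ENNReal.ofReal ‖f' r‖ = ∫⁻ r, (F1 * F2) r ∂μt := hprod
      _ ≤ (∫⁻ r, F1 r ^ (2:ℝ) ∂μt) ^ (1/(2:ℝ)) * (∫⁻ r, F2 r ^ (2:ℝ) ∂μt) ^ (1/(2:ℝ)) :=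
          ENNReal.lintegral_mul_le_Lp_mul_Lq μt (by constructor <;> norm_num) hm1 hm2
      _ = (G t) ^ (1/2:ℝ) * (ENNReal.ofReal (t ^ (1-2*a) / (1-2*a))) ^ (1/2:ℝ) := by
          rw [h1, h2]
  -- finiteness of G and integrability of f' near 0
  have hGlt : ∀ t : ℝ, G t < ⊤ := fun t => lt_of_le_of_lt (hGfin t) hint
  have hIntf' : ∀ t ∈ Ioc (0:ℝ) 1, IntegrableOn f' (Ioc (0:ℝ) t) := by
    intro t ht
    refine ⟨hmeasC.mono_measure (Measure.restrict_mono (Ioc_subset_Ioc le_rfl ht.2) le_rfl), ?_⟩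
    rw [hasFiniteIntegral_iff_norm]
    calc ∫⁻ r in Ioc (0:ℝ) t, ENNReal.ofReal ‖f' r‖
        ≤ (G t) ^ (1/2:ℝ) * (ENNReal.ofReal (t ^ (1-2*a) / (1-2*a))) ^ (1/2:ℝ) := key t ht
      _ < ⊤ := by
          apply ENNReal.mul_lt_top
          · exact ENNReal.rpow_lt_top_of_nonneg (by norm_num) (hGlt t).ne
          · exact ENNReal.rpow_lt_top_of_nonneg (by norm_num) ENNReal.ofReal_ne_top
  set L : ℂ := f 1 - ∫ r in Ioc (0:ℝ) 1, f' r with hL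
  have hid : ∀ t ∈ Ioc (0:ℝ) 1, f t - L = ∫ r in Ioc (0:ℝ) t, f' r := by
    intro t ht
    have hsplit : ∫ r in Ioc (0:ℝ) 1, f' r =
        (∫ r in Ioc (0:ℝ) t, f' r) + ∫ r in Ioc t 1, f' r := by
      rw [← setIntegral_union (Ioc_disjoint_Ioc_of_le le_rfl) measurableSet_Ioc
        (hIntf' t ht) ((hloc t ht.1 1 (mem_Ioi.mpr one_pos)).1),
        Ioc_union_Ioc_eq_Ioc ht.1.le ht.2]
    have hft : f 1 - f t = ∫ r in Ioc t 1, f' r := by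
      rw [hFTC t ht.1 1 (mem_Ioi.mpr one_pos), intervalIntegral.integral_of_le ht.2]
    rw [hL]
    rw [hsplit]
    linear_combination -hft
  -- norm bound
  have hbound : ∀ t ∈ Ioc (0:ℝ) 1,
      ‖f t - L‖ ≤ Real.sqrt (G t).toReal * Real.sqrt (t ^ (1-2*a) / (1-2*a)) := by
    intro t ht
    rw [hid t ht]
    have h1 : ‖∫ r in Ioc (0:ℝ) t, f' r‖ ≤ ∫ r in Ioc (0:ℝ) t, ‖f' r‖ :=
      norm_integral_le_integral_norm _
    have h2 : ∫ r in Ioc (0:ℝ) t, ‖f' r‖ =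
        (∫⁻ r in Ioc (0:ℝ) t, ENNReal.ofReal ‖f' r‖).toReal := by
      rw [integral_eq_lintegral_of_nonneg_ae (ae_of_all _ fun r => norm_nonneg _)
        (hIntf' t ht).1.norm]
    have h3 : (∫⁻ r in Ioc (0:ℝ) t, ENNReal.ofReal ‖f' r‖).toReal ≤
        ((G t) ^ (1/2:ℝ) * (ENNReal.ofReal (t ^ (1-2*a) / (1-2*a))) ^ (1/2:ℝ)).toReal := by
      refine ENNReal.toReal_mono ?_ (key t ht)
      exact (ENNReal.mul_lt_top
        (ENNReal.rpow_lt_top_of_nonneg (by norm_num) (hGlt t).ne)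
        (ENNReal.rpow_lt_top_of_nonneg (by norm_num) ENNReal.ofReal_ne_top)).ne
    have h4 : ((G t) ^ (1/2:ℝ) * (ENNReal.ofReal (t ^ (1-2*a) / (1-2*a))) ^ (1/2:ℝ)).toReal =
        Real.sqrt (G t).toReal * Real.sqrt (t ^ (1-2*a) / (1-2*a)) := by
      rw [ENNReal.toReal_mul, ← ENNReal.toReal_rpow, ← ENNReal.toReal_rpow,
        ENNReal.toReal_ofReal (div_nonneg (Real.rpow_nonneg ht.1.le _) ha'.le), Real.sqrt_eq_rpow, Real.sqrt_eq_rpow]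
    calc ‖∫ r in Ioc (0:ℝ) t, f' r‖ ≤ ∫ r in Ioc (0:ℝ) t, ‖f' r‖ := h1
      _ = (∫⁻ r in Ioc (0:ℝ) t, ENNReal.ofReal ‖f' r‖).toReal := h2
      _ ≤ _ := h3.trans_eq h4
  -- G t → 0 as t → 0⁺
  have hG0 : Tendsto G (𝓝[>] (0:ℝ)) (𝓝 0) := by
    have hrw : ∀ t : ℝ, G t = ∫⁻ r in Ioc (0:ℝ) t, g r ∂(volume.restrict (Ioi (0:ℝ))) := by
      intro t
      rw [Measure.restrict_restrict measurableSet_Ioc,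
        inter_eq_left.mpr Ioc_subset_Ioi_self]
    rw [show G = fun t => ∫⁻ r in Ioc (0:ℝ) t, g r ∂(volume.restrict (Ioi (0:ℝ))) from funext hrw]
    refine tendsto_setLIntegral_zero hint.ne ?_
    have : ∀ t : ℝ, (volume.restrict (Ioi (0:ℝ))) (Ioc (0:ℝ) t) = ENNReal.ofReal t := by
      intro t
      rw [Measure.restrict_apply measurableSet_Ioc,
        inter_eq_left.mpr Ioc_subset_Ioi_self, Real.volume_Ioc, sub_zero]
    simp only [Function.comp_def, this]
    have h0 : Tendsto (fun t : ℝ => ENNReal.ofReal t) (𝓝 0) (𝓝 0) := by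
      simpa using (ENNReal.continuous_ofReal.tendsto 0)
    exact h0.mono_left nhdsWithin_le_nhds
  have hS : Tendsto (fun t : ℝ => Real.sqrt (G t).toReal) (𝓝[>] (0:ℝ)) (𝓝 0) := by
    have h1 : Tendsto (fun t : ℝ => (G t).toReal) (𝓝[>] (0:ℝ)) (𝓝 0) :=
      (ENNReal.tendsto_toReal (by simp)).comp hG0
    simpa [Function.comp_def] using (Real.continuous_sqrt.tendsto 0).comp h1
  have hev : ∀ᶠ t in 𝓝[>] (0:ℝ), t ∈ Ioc (0:ℝ) 1 :=
    Ioc_mem_nhdsGT_of_mem ⟨le_refl 0, one_pos⟩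
  -- the weighted bound
  have hbound2 : ∀ t ∈ Ioc (0:ℝ) 1,
      ‖f t - L‖ * t ^ (-(1/2 - a)) ≤ Real.sqrt (G t).toReal / Real.sqrt (1 - 2*a) := by
    intro t ht
    have ht0 : (0:ℝ) < t := ht.1
    have hc : Real.sqrt (t ^ (1-2*a) / (1-2*a)) * t ^ (-(1/2 - a)) =
        1 / Real.sqrt (1 - 2*a) := by
      rw [Real.sqrt_div (Real.rpow_nonneg ht0.le _), div_mul_eq_mul_div,
        Real.sqrt_eq_rpow (t ^ (1-2*a)), ← Real.rpow_mul ht0.le, ← Real.rpow_add ht0]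
      have e2 : (1-2*a) * (1/2) + (-(1/2 - a)) = 0 := by ring
      rw [e2, Real.rpow_zero]
    calc ‖f t - L‖ * t ^ (-(1/2 - a))
        ≤ (Real.sqrt (G t).toReal * Real.sqrt (t ^ (1-2*a) / (1-2*a))) * t ^ (-(1/2 - a)) := by
          apply mul_le_mul_of_nonneg_right (hbound t ht) (Real.rpow_nonneg ht0.le _)
      _ = Real.sqrt (G t).toReal * (Real.sqrt (t ^ (1-2*a) / (1-2*a)) * t ^ (-(1/2 - a))) := by
          ring
      _ = Real.sqrt (G t).toReal / Real.sqrt (1 - 2*a) := by rw [hc]; ring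
  -- second limit
  have hT2 : Tendsto (fun t : ℝ => ‖f t - L‖ * t ^ (-(1/2 - a))) (𝓝[>] (0:ℝ)) (𝓝 0) := by
    refine squeeze_zero' ?_ ?_ (g := fun t => Real.sqrt (G t).toReal / Real.sqrt (1-2*a)) (by simpa using hS.div_const (Real.sqrt (1-2*a)))
    · filter_upwards [self_mem_nhdsWithin] with t ht
      exact mul_nonneg (norm_nonneg _) (Real.rpow_nonneg (le_of_lt ht) _)
    · filter_upwards [hev] with t ht
      exact hbound2 t ht
  -- first limit
  have hT1 : Tendsto f (𝓝[>] (0:ℝ)) (𝓝 L) := by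
    have hz : Tendsto (fun t : ℝ => f t - L) (𝓝[>] (0:ℝ)) (𝓝 0) := by
      rw [tendsto_zero_iff_norm_tendsto_zero]
      have hpow : Tendsto (fun t : ℝ => t ^ ((1:ℝ)/2 - a)) (𝓝[>] (0:ℝ)) (𝓝 0) := by
        have := (Real.continuousAt_rpow_const 0 ((1:ℝ)/2 - a) (Or.inr (by linarith))).tendsto
        rw [Real.zero_rpow (by linarith)] at this
        exact this.mono_left nhdsWithin_le_nhds
      have heq : ∀ᶠ t in 𝓝[>] (0:ℝ),
          ‖f t - L‖ = (‖f t - L‖ * t ^ (-(1/2 - a))) * t ^ ((1:ℝ)/2 - a) := by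
        filter_upwards [self_mem_nhdsWithin] with t ht
        rw [mul_assoc, ← Real.rpow_add ht]
        norm_num
      rw [tendsto_congr' heq]
      simpa using hT2.mul hpow
    have : Tendsto (fun t : ℝ => (f t - L) + L) (𝓝[>] (0:ℝ)) (𝓝 (0 + L)) :=
      hz.add tendsto_const_nhds
    simpa using this
  exact ⟨L, hT1, hT2⟩
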